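/- Let N be a finitely generated module over a Noetherian ring R with injective resolution taken minimal, and let M be a finitely generated R-module with Supp(M) ∩ Supp(N) ⊆ V(a). Then Hom_R(M, E^i) is a-torsion for each term E^i of a minimal injective resolution of N. -/

import Mathlib

open CategoryTheory Limits Opposite

universe u

noncomputable section

variable (R : Type u) [CommRing R]

/-- A Serre subcategory of the category of `R`-modules, described as a predicate on
`ModuleCat R` closed under isomorphisms, submodules, quotients and extensions. -/
structure SerreClass : Type (u + 1) where
  mem : ModuleCat.{u} R → Prop
  mem_of_iso : ∀ {X Y : ModuleCat.{u} R}, (X ≅ Y) → mem X → mem Y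
  mem_submodule : ∀ (X : ModuleCat.{u} R) (A : Submodule R X), mem X → mem (ModuleCat.of R A)
  mem_quotient : ∀ (X : ModuleCat.{u} R) (A : Submodule R X), mem X →
    mem (ModuleCat.of R (X ⧸ A))
  mem_of_extension : ∀ (X : ModuleCat.{u} R) (A : Submodule R X),
    mem (ModuleCat.of R A) → mem (ModuleCat.of R (X ⧸ A)) → mem X

/-- A Melkersson subcategory: a Serre subcategory such that, for every ideal `b` and every
`b`-torsion module `X`, if `(0 :_X b)` belongs to the class then so does `X`. -/
structure MelkerssonClass extends SerreClass R where
  mem_of_torsion : ∀ (b : Ideal R) (X : ModuleCat.{u} R),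
    (∀ x : X, ∃ n : ℕ, ∀ r ∈ b ^ n, r • x = 0) →
    mem (ModuleCat.of R (Submodule.torsionBySet R X (b : Set R))) → mem X

variable (a : Ideal R) (M N : Type u) [AddCommGroup M] [Module R M]
  [AddCommGroup N] [Module R N]

/-- `M ⧸ aⁿM` as an object of `ModuleCat R`. -/
abbrev ModQuotPow (n : ℕ) : ModuleCat.{u} R :=
  ModuleCat.of R (M ⧸ (a ^ n • ⊤ : Submodule R M))

/-- The canonical projection `M ⧸ aⁿ⁺¹M → M ⧸ aⁿM`. -/
def modQuotPowHom (n : ℕ) : ModQuotPow R a M (n + 1) ⟶ ModQuotPow R a M n :=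
  ModuleCat.ofHom (Submodule.mapQ _ _ LinearMap.id
    (by
      refine le_trans (Submodule.smul_mono (Ideal.pow_le_pow_right (Nat.le_succ n)) le_rfl) ?_
      rw [Submodule.comap_id]))

/-- The direct system `n ↦ Extⁱ(M ⧸ aⁿM, N)`. -/
def glcDiagram (i : ℕ) : ℕ ⥤ ModuleCat.{u} R :=
  Functor.ofSequence
    (X := fun n => ((Ext R (ModuleCat.{u} R) i).obj (op (ModQuotPow R a M n))).obj
      (ModuleCat.of R N))
    (fun n => ((Ext R (ModuleCat.{u} R) i).map (modQuotPowHom R a M n).op).app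
      (ModuleCat.of R N))

/-- The `i`-th generalized local cohomology module
`Hⁱ_a(M, N) = colim_n Extⁱ(M ⧸ aⁿM, N)`. -/
def glc (i : ℕ) : ModuleCat.{u} R :=
  colimit (glcDiagram R a M N i)

/-- `M` has projective dimension at most `n`: all Ext-groups `Extⁱ(M, -)` with `i > n` vanish. -/
def projDimLE (n : ℕ) : Prop :=
  ∀ i : ℕ, n < i → ∀ X : ModuleCat.{u} R,
    Subsingleton (((Ext R (ModuleCat.{u} R) i).obj (op (ModuleCat.of R M))).obj X)

/-- The Serre cohomological dimension `cd_{(a,S)}(M,N)`, an element of `WithBot ℕ∞`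
(with `sup ∅ = ⊥ = -∞`). -/
def serreCD (S : SerreClass R) : WithBot ℕ∞ :=
  sSup ((fun i : ℕ => ((i : ℕ∞) : WithBot ℕ∞)) '' {i : ℕ | ¬ S.mem (glc R a M N i)})



section AuxLemmas

variable {R : Type u} [CommRing R]

/-- If `K` is an essential submodule of `E` over a Noetherian ring, then the support of `E`
is contained in the support of `K`. -/
lemma aux_support_le_of_essential [IsNoetherianRing R] {E : Type u} [AddCommGroup E] [Module R E]
    (K : Submodule R E) (hK : ∀ B : Submodule R E, B ⊓ K = ⊥ → B = ⊥)
    {p : PrimeSpectrum R} (hp : p ∈ Module.support R E) : p ∈ Module.support R K := by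
  rw [Module.mem_support_iff'] at hp
  obtain ⟨x, hx⟩ := hp
  obtain ⟨J, ⟨t, ht, hJ⟩, hJmax⟩ :=
    set_has_maximal_iff_noetherian.mpr (inferInstance : IsNoetherian R R)
      {J : Ideal R | ∃ t, t ∉ p.asIdeal ∧ J = (R ∙ (t • x)).annihilator}
      ⟨(R ∙ ((1 : R) • x)).annihilator, 1, p.asIdeal.primeCompl.one_mem, rfl⟩
  set y : E := t • x with hy
  -- key property from maximality
  have key : ∀ u, u ∉ p.asIdeal → ∀ f : R, f • (u • y) = 0 → f • y = 0 := by
    intro u hu f hf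
    have hle : J ≤ (R ∙ (u • y)).annihilator := by
      rw [hJ]
      intro c hc
      rw [Submodule.mem_annihilator_span_singleton] at hc ⊢
      rw [smul_comm, hc, smul_zero]
    have hmem : (R ∙ (u • y)).annihilator ∈
        {J : Ideal R | ∃ t, t ∉ p.asIdeal ∧ J = (R ∙ (t • x)).annihilator} := by
      refine ⟨u * t, fun hmem => ?_, by rw [mul_smul]⟩
      rcases p.isPrime.mem_or_mem hmem with h' | h'
      exacts [hu h', ht h']
    have heq : J = (R ∙ (u • y)).annihilator := hle.eq_of_not_lt (hJmax _ hmem)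
    have hfJ : f ∈ J := by
      rw [heq, Submodule.mem_annihilator_span_singleton]; exact hf
    rw [hJ, Submodule.mem_annihilator_span_singleton] at hfJ
    exact hfJ
  have hy0 : y ≠ 0 := hx t ht
  have hne : (R ∙ y) ⊓ K ≠ ⊥ := by
    intro hbot
    exact hy0 (Submodule.span_singleton_eq_bot.mp (hK _ hbot))
  obtain ⟨z, hz, hz0⟩ := (Submodule.ne_bot_iff _).mp hne
  obtain ⟨hz1, hz2⟩ := Submodule.mem_inf.mp hz
  obtain ⟨r, hr⟩ := Submodule.mem_span_singleton.mp hz1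
  rw [Module.mem_support_iff']
  refine ⟨⟨z, hz2⟩, fun u hu h0 => ?_⟩
  have : u • z = 0 := by
    have := congrArg (Subtype.val) h0
    simpa using this
  rw [← hr, smul_comm] at this
  have := key u hu r this
  rw [hr] at this
  exact hz0 this

/-- The support of every term of a minimal injective resolution of `N` is contained in the
support of `N`. -/
lemma aux_supp_cocomplex [IsNoetherianRing R]
    (N : Type u) [AddCommGroup N] [Module R N]
    (I : InjectiveResolution (ModuleCat.of R N))
    (hmin : ∀ i : ℕ, ∀ B : Submodule R (I.cocomplex.X i),
      B ⊓ LinearMap.ker (I.cocomplex.d i (i + 1)).hom = ⊥ → B = ⊥) :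
    ∀ i : ℕ, Module.support R (I.cocomplex.X i) ⊆ Module.support R N := by
  intro i
  induction i with
  | zero =>
    intro p hp
    have h1 := aux_support_le_of_essential _ (hmin 0) hp
    have hex : LinearMap.range (I.ι.f 0).hom = LinearMap.ker (I.cocomplex.d 0 1).hom :=
      I.exact₀.moduleCat_range_eq_ker
    rw [← hex] at h1
    have h2 : Module.support R (LinearMap.range (I.ι.f 0).hom) ⊆
        Module.support R (((CochainComplex.single₀ (ModuleCat.{u} R)).obj
          (ModuleCat.of R N)).X 0) :=
      Module.support_subset_of_surjective _ (LinearMap.surjective_rangeRestrict (I.ι.f 0).hom)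
    have h3 := h2 h1
    have e : (((CochainComplex.single₀ (ModuleCat.{u} R)).obj (ModuleCat.of R N)).X 0) ≃ₗ[R]
        N := (HomologicalComplex.singleObjXSelf (ComplexShape.up ℕ) 0
          (ModuleCat.of R N)).toLinearEquiv
    exact e.support_eq ▸ h3
  | succ i ih =>
    intro p hp
    have h1 := aux_support_le_of_essential _ (hmin (i + 1)) hp
    have hex : LinearMap.range (I.cocomplex.d i (i + 1)).hom =
        LinearMap.ker (I.cocomplex.d (i + 1) (i + 2)).hom :=
      (I.exact_succ i).moduleCat_range_eq_ker
    rw [← hex] at h1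
    have h2 : Module.support R (LinearMap.range (I.cocomplex.d i (i + 1)).hom) ⊆
        Module.support R (I.cocomplex.X i) :=
      Module.support_subset_of_surjective _
        (LinearMap.surjective_rangeRestrict (I.cocomplex.d i (i + 1)).hom)
    exact ih (h2 h1)

end AuxLemmas

theorem stmt19 [IsNoetherianRing R] [Module.Finite R M] [Module.Finite R N]
    (h : Module.support R M ∩ Module.support R N ⊆ PrimeSpectrum.zeroLocus (a : Set R))
    (I : InjectiveResolution (ModuleCat.of R N))
    (hmin : ∀ i : ℕ, ∀ B : Submodule R (I.cocomplex.X i),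
      B ⊓ LinearMap.ker (I.cocomplex.d i (i + 1)).hom = ⊥ → B = ⊥) :
    ∀ i : ℕ, ∀ f : M →ₗ[R] I.cocomplex.X i,
      ∃ k : ℕ, ∀ r ∈ a ^ k, r • f = 0 := by
  intro i f
  have hXM : Module.support R (LinearMap.range f) ⊆ Module.support R M :=
    Module.support_subset_of_surjective _ (LinearMap.surjective_rangeRestrict f)
  have hXN : Module.support R (LinearMap.range f) ⊆ Module.support R N :=
    le_trans (Module.support_subset_of_injective (LinearMap.range f).subtype
      Subtype.val_injective) (aux_supp_cocomplex N I hmin i)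
  have hsub : Module.support R (LinearMap.range f) ⊆
      PrimeSpectrum.zeroLocus (a : Set R) := fun p hp => h ⟨hXM hp, hXN hp⟩
  rw [Module.support_eq_zeroLocus] at hsub
  have hrad : a ≤ (Module.annihilator R (LinearMap.range f)).radical :=
    (PrimeSpectrum.zeroLocus_subset_zeroLocus_iff _ _).mp hsub
  obtain ⟨n, hn⟩ := Ideal.exists_radical_pow_le_of_fg
    (Module.annihilator R (LinearMap.range f)) (IsNoetherian.noetherian _)
  refine ⟨n, fun r hr => ?_⟩
  have hr' : r ∈ Module.annihilator R (LinearMap.range f) :=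
    hn (Ideal.pow_right_mono hrad n hr)
  ext m
  have := Module.mem_annihilator.mp hr' ⟨f m, LinearMap.mem_range_self f m⟩
  have h2 : r • f m = 0 := by
    have := congrArg Subtype.val this
    exact this
  exact h2
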